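/- Let G = (V⁺, V⁻; E) be a simple bipartite graph with edge weights w : E → ℝ, let μ be a minimum-weight perfect matching in (G, w), let s ∈ V⁺, and let w̃ : E → ℝ be new weights satisfying w̃(e) = w(e) for every edge e ∈ E ∖ δ_G(s). Suppose μ* is a perfect matching in G with w̃(μ*) < w̃(μ). Then the symmetric difference μ* △ μ contains a directed cycle C in the auxiliary graph G_μ that passes through s and satisfies w̃_μ(C) ≤ w̃(μ*) − w̃(μ) < 0, and C is the only cycle of μ* △ μ with negative weight under w̃_μ. -/

import Mathlib

/-!  Common setup: weighted bipartite graphs `G = (V⁺, V⁻; E)` with `V⁺ = α`, `V⁻ = β`,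
edges directed from `V⁺` to `V⁻`, auxiliary graphs of matchings, walks and cycles. -/

variable {α β : Type*}

/-- Directed adjacency of the auxiliary graph `G_μ`: non-matching edges go from `V⁺` to `V⁻`,
matching edges are reversed. -/
def auxAdj (E μ : Finset (α × β)) : α ⊕ β → α ⊕ β → Prop
  | Sum.inl u, Sum.inr v => (u, v) ∈ E ∧ (u, v) ∉ μ
  | Sum.inr v, Sum.inl u => (u, v) ∈ μ
  | _, _ => False

/-- The auxiliary weight `w_μ`, as a function on pairs of vertices. -/
def auxW (w : α × β → ℝ) : α ⊕ β → α ⊕ β → ℝ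
  | Sum.inl u, Sum.inr v => w (u, v)
  | Sum.inr v, Sum.inl u => - w (u, v)
  | _, _ => 0

/-- Weight of a walk, given by its list of vertices. -/
def walkWeight {V : Type*} (W : V → V → ℝ) (l : List V) : ℝ :=
  ((l.zip l.tail).map fun p => W p.1 p.2).sum

/-- A (simple) directed path from `s` to `t`, given by its list of vertices. -/
def IsDiPath {V : Type*} (adj : V → V → Prop) (s t : V) (l : List V) : Prop :=
  l.head? = some s ∧ l.getLast? = some t ∧ l.Chain' adj ∧ l.Nodup

/-- A (simple) directed cycle, given by the list of its vertices (the closing edge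
from the last vertex back to the first is implicit). -/
def IsDiCycle {V : Type*} (adj : V → V → Prop) (l : List V) : Prop :=
  l ≠ [] ∧ l.Nodup ∧ (l ++ l.take 1).Chain' adj

/-- Total auxiliary weight of a directed cycle (including the closing edge). -/
def cycleWeight {V : Type*} (W : V → V → ℝ) (l : List V) : ℝ :=
  walkWeight W (l ++ l.take 1)

/-- The underlying undirected edge of a dart of the auxiliary graph. -/
def undEdge : (α ⊕ β) × (α ⊕ β) → Option (α × β)
  | (Sum.inl u, Sum.inr v) => some (u, v)
  | (Sum.inr v, Sum.inl u) => some (u, v)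
  | _ => none

/-- The set of underlying edges of `G` used by a walk in the auxiliary graph. -/
def usedEdges [DecidableEq α] [DecidableEq β] (l : List (α ⊕ β)) : Finset (α × β) :=
  ((l.zip l.tail).filterMap undEdge).toFinset

/-- An edge set is a matching if every vertex appears at most once. -/
def IsMatching (μ : Finset (α × β)) : Prop :=
  ∀ e ∈ μ, ∀ f ∈ μ, (e.1 = f.1 ∨ e.2 = f.2) → e = f

/-- A perfect matching: a matching contained in `E` covering every vertex. -/
def IsPerfectMatching (E μ : Finset (α × β)) : Prop :=
  μ ⊆ E ∧ IsMatching μ ∧ (∀ u : α, ∃ v : β, (u, v) ∈ μ) ∧ (∀ v : β, ∃ u : α, (u, v) ∈ μ)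

/-- The weight of a matching. -/
def matchingWeight (w : α × β → ℝ) (μ : Finset (α × β)) : ℝ := ∑ e ∈ μ, w e

/-- A minimum-weight perfect matching. -/
def IsMinPerfectMatching (E : Finset (α × β)) (w : α × β → ℝ) (μ : Finset (α × β)) : Prop :=
  IsPerfectMatching E μ ∧
    ∀ ν : Finset (α × β), IsPerfectMatching E ν → matchingWeight w μ ≤ matchingWeight w ν

/-- `p` is a potential for `(G_μ, w_μ)`: all reduced weights are nonnegative. -/
def IsPotential (E μ : Finset (α × β)) (w : α × β → ℝ) (p : α ⊕ β → ℝ) : Prop :=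
  ∀ x y : α ⊕ β, auxAdj E μ x y → auxW w x y + p x - p y ≥ 0


/-! ### Auxiliary general lemmas -/

section listlemmas
variable {V : Type*}

lemma zip_tail_map_range :
    ∀ (n : ℕ) (v : ℕ → V),
      ((List.range (n+1)).map v).zip (((List.range (n+1)).map v).tail)
        = (List.range n).map (fun i => (v i, v (i+1))) := by
  intro n
  induction n with
  | zero => intro v; simp [List.range_succ]
  | succ n ih =>
    intro v
    have hM : List.map v (List.range (n+1+1)) = v 0 :: List.map (v ∘ Nat.succ) (List.range (n+1)) := by
      rw [List.range_succ_eq_map (n := n+1)]; simp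
    have hM2 : List.map (v ∘ Nat.succ) (List.range (n+1)) = v 1 :: List.map (v ∘ Nat.succ ∘ Nat.succ) (List.range n) := by
      rw [List.range_succ_eq_map (n := n)]; simp [Function.comp]
    have htail : (List.map (v ∘ Nat.succ) (List.range (n+1))).tail
        = List.map (v ∘ Nat.succ ∘ Nat.succ) (List.range n) := by rw [hM2]; rfl
    have key := ih (v ∘ Nat.succ)
    rw [hM, List.tail_cons]
    conv_lhs => rw [hM2]
    rw [List.zip_cons_cons, ← hM2, ← htail, key]
    rw [List.range_succ_eq_map (n := n)]
    simp [Function.comp]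

lemma walkWeight_map_range (W : V → V → ℝ) (n : ℕ) (v : ℕ → V) :
    walkWeight W ((List.range (n+1)).map v) = ∑ i ∈ Finset.range n, W (v i) (v (i+1)) := by
  rw [walkWeight, zip_tail_map_range, List.map_map]
  induction n with
  | zero => simp
  | succ n ih => rw [List.range_succ, Finset.sum_range_succ, ← ih]; simp

lemma chain'_map_range (R : V → V → Prop) (n : ℕ) (v : ℕ → V) :
    ((List.range (n+1)).map v).Chain' R ↔ ∀ i < n, R (v i) (v (i+1)) := by
  show List.IsChain R _ ↔ _
  rw [List.isChain_map, List.isChain_range_succ]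

lemma nodup_map_range (n : ℕ) (v : ℕ → V)
    (h : ∀ i < n, ∀ j < n, v i = v j → i = j) : ((List.range n).map v).Nodup := by
  apply List.Nodup.map_on _ (List.nodup_range (n := n))
  intro i hi j hj
  exact h i (List.mem_range.mp hi) j (List.mem_range.mp hj)

lemma map_range_append_take_one (n : ℕ) (hn : 0 < n) (v : ℕ → V) (hv : v n = v 0) :
    ((List.range n).map v) ++ ((List.range n).map v).take 1 = (List.range (n+1)).map v := by
  obtain ⟨m, rfl⟩ := Nat.exists_eq_add_of_lt hn
  have h1 : ((List.range (0+m+1)).map v).take 1 = [v 0] := by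
    rw [List.range_succ_eq_map]; simp
  rw [h1, List.range_succ (n := 0+m+1), List.map_append, List.map_singleton, hv]

lemma mem_zip_tail (l : List V) (i : ℕ) (h : i + 1 < l.length) :
    (l.get ⟨i, by omega⟩, l.get ⟨i+1, h⟩) ∈ l.zip l.tail := by
  have hlen : i < (l.zip l.tail).length := by
    rw [List.length_zip, List.length_tail]; omega
  have : (l.zip l.tail).get ⟨i, hlen⟩ = (l.get ⟨i, by omega⟩, l.get ⟨i+1, h⟩) := by
    simp [List.getElem_zip]
  rw [← this]
  exact List.get_mem _ _

lemma getElem_eq_iterate (l : List V) (x0 : V) (step : V → V) (hne : 0 < l.length)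
    (hhead : l.get ⟨0, hne⟩ = x0)
    (hstep : ∀ i (h : i+1 < l.length), l.get ⟨i+1, h⟩ = step (l.get ⟨i, by omega⟩)) :
    ∀ i (h : i < l.length), l.get ⟨i, h⟩ = step^[i] x0 := by
  intro i
  induction i with
  | zero => intro h; exact hhead
  | succ i ih =>
    intro h
    rw [hstep i h, ih (by omega), Function.iterate_succ_apply']

end listlemmas

section orbit
variable {V : Type*} [DecidableEq V] (step : V → V)

/-- the orbit finset of `x0` under `step` -/
def orbFin (x0 : V) (n : ℕ) : Finset V := (Finset.range n).image (fun i => step^[i] x0)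

lemma orbFin_closed {x0 : V} {n : ℕ} (hn : 0 < n) (hper : step^[n] x0 = x0) :
    ∀ x ∈ orbFin step x0 n, step x ∈ orbFin step x0 n := by
  intro x hx
  obtain ⟨i, hi, rfl⟩ := Finset.mem_image.mp hx
  rw [Finset.mem_range] at hi
  rw [← Function.iterate_succ_apply' step i x0]
  rcases Nat.lt_or_ge (i+1) n with h | h
  · exact Finset.mem_image.mpr ⟨i+1, Finset.mem_range.mpr h, rfl⟩
  · have : i + 1 = n := le_antisymm (by omega) h
    rw [show i.succ = n from this, hper]
    exact Finset.mem_image.mpr ⟨0, Finset.mem_range.mpr hn, rfl⟩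

lemma orbFin_pred {x0 : V} {n : ℕ} (hn : 0 < n) (hper : step^[n] x0 = x0) :
    ∀ x ∈ orbFin step x0 n, ∃ y ∈ orbFin step x0 n, step y = x := by
  intro x hx
  obtain ⟨i, hi, rfl⟩ := Finset.mem_image.mp hx
  rw [Finset.mem_range] at hi
  rcases Nat.eq_zero_or_pos i with rfl | hipos
  · refine ⟨step^[n-1] x0, Finset.mem_image.mpr ⟨n-1, Finset.mem_range.mpr (by omega), rfl⟩, ?_⟩
    rw [← Function.iterate_succ_apply' step (n-1) x0]
    rw [show (n-1).succ = n by omega, hper]; rfl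
  · refine ⟨step^[i-1] x0, Finset.mem_image.mpr ⟨i-1, Finset.mem_range.mpr (by omega), rfl⟩, ?_⟩
    rw [← Function.iterate_succ_apply' step (i-1) x0]
    congr 1; omega

lemma iterate_mem_orbFin {x0 : V} {n : ℕ} (hn : 0 < n) (hper : step^[n] x0 = x0) (i : ℕ) :
    step^[i] x0 ∈ orbFin step x0 n := by
  induction i with
  | zero => exact Finset.mem_image.mpr ⟨0, Finset.mem_range.mpr hn, rfl⟩
  | succ i ih =>
    rw [Function.iterate_succ_apply']
    exact orbFin_closed step hn hper _ ih

lemma orbFin_eq_of_mem {x0 x1 : V} {n m : ℕ} (hn : 0 < n) (hper : step^[n] x0 = x0)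
    (hm : 0 < m) (hper1 : step^[m] x1 = x1)
    (h : x1 ∈ orbFin step x0 n) : orbFin step x1 m = orbFin step x0 n := by
  obtain ⟨j, hj, hx1⟩ := Finset.mem_image.mp h
  rw [Finset.mem_range] at hj
  have hx0 : x0 ∈ orbFin step x1 m := by
    have : step^[n-j] x1 = x0 := by
      rw [← hx1, ← Function.iterate_add_apply]
      have : n - j + j = n := by omega
      rw [this, hper]
    rw [← this]; exact iterate_mem_orbFin step hm hper1 _
  apply Finset.Subset.antisymm
  · intro x hx
    obtain ⟨i, _, rfl⟩ := Finset.mem_image.mp hx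
    rw [← hx1, ← Function.iterate_add_apply]
    exact iterate_mem_orbFin step hn hper _
  · intro x hx
    obtain ⟨i, _, rfl⟩ := Finset.mem_image.mp hx
    obtain ⟨k, _, hk⟩ := Finset.mem_image.mp hx0
    rw [← hk, ← Function.iterate_add_apply]
    exact iterate_mem_orbFin step hm hper1 _

end orbit

/-- The canonical step function of the symmetric difference of two perfect matchings. -/
def mstep (mstar : α → β) (invμ : β → α) : α ⊕ β → α ⊕ β
  | Sum.inl u => Sum.inr (mstar u)
  | Sum.inr v => Sum.inl (invμ v)

/-- The underlying edge attached to a vertex of the auxiliary graph. -/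
def edgeOf (mstar : α → β) (invμ : β → α) : α ⊕ β → α × β
  | Sum.inl u => (u, mstar u)
  | Sum.inr v => (invμ v, v)

lemma undEdge_mstep (mstar : α → β) (invμ : β → α) (x : α ⊕ β) :
    undEdge (x, mstep mstar invμ x) = some (edgeOf mstar invμ x) := by
  cases x <;> rfl

lemma usedEdges_map_range [DecidableEq α] [DecidableEq β]
    (mstar : α → β) (invμ : β → α) (x0 : α ⊕ β) (n : ℕ) :
    usedEdges ((List.range (n+1)).map (fun i => (mstep mstar invμ)^[i] x0))
      = ((Finset.range n).image (fun i => (mstep mstar invμ)^[i] x0)).image (edgeOf mstar invμ) := by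
  set step := mstep mstar invμ
  rw [usedEdges, zip_tail_map_range]
  have h2 : List.filterMap undEdge ((List.range n).map fun i => ((step^[i] x0 : α ⊕ β), step^[i+1] x0))
      = (List.range n).map fun i => edgeOf mstar invμ (step^[i] x0) := by
    rw [List.filterMap_map]
    have h1 : (undEdge ∘ fun i => ((step^[i] x0 : α ⊕ β), step^[i+1] x0))
        = some ∘ fun i => edgeOf mstar invμ (step^[i] x0) := by
      funext i
      simp only [Function.comp_apply]
      rw [Function.iterate_succ_apply', undEdge_mstep]
    rw [h1, List.filterMap_eq_map]
  rw [h2]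
  ext e
  simp only [List.mem_toFinset, List.mem_map, List.mem_range, Finset.mem_image,
    Finset.mem_range]
  constructor
  · rintro ⟨i, hi, rfl⟩; exact ⟨step^[i] x0, ⟨i, hi, rfl⟩, rfl⟩
  · rintro ⟨x, ⟨i, hi, rfl⟩, rfl⟩; exact ⟨i, hi, rfl⟩

section matching
set_option linter.unusedSectionVars false
variable [Fintype α] [Fintype β] [DecidableEq α] [DecidableEq β]
variable {E μ μstar : Finset (α × β)} {mstar mμ : α → β} {invμ : β → α} {w tw : α × β → ℝ}
variable {x0 : α ⊕ β} {n : ℕ}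

lemma matchingWeight_eq_sum (w' : α × β → ℝ) {ν : Finset (α × β)} {m : α → β}
    (hν : IsMatching ν) (hm : ∀ u, (u, m u) ∈ ν) :
    matchingWeight w' ν = ∑ u, w' (u, m u) := by
  have himg : ν = Finset.univ.image (fun u => (u, m u)) := by
    apply Finset.Subset.antisymm
    · intro e he
      have h2 := hν e he (e.1, m e.1) (hm e.1) (Or.inl rfl)
      rw [h2]; exact Finset.mem_image.mpr ⟨e.1, Finset.mem_univ _, rfl⟩
    · intro e he
      obtain ⟨u, -, rfl⟩ := Finset.mem_image.mp he
      exact hm u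
  rw [himg, matchingWeight, Finset.sum_image]
  intro x _ y _ h
  simpa using congrArg Prod.fst h

lemma switch_nonneg
    (hμmin : IsMinPerfectMatching E w μ) (hstarE : μstar ⊆ E)
    (hms : ∀ u, (u, mstar u) ∈ μstar) (hmm : ∀ u, (u, mμ u) ∈ μ)
    (hsinj : Function.Injective mstar)
    (him : ∀ v, mμ (invμ v) = v) (hmi : ∀ u, invμ (mμ u) = u)
    (S : Finset α) (hS : ∀ u, invμ (mstar u) ∈ S ↔ u ∈ S) :
    0 ≤ ∑ u ∈ S, (w (u, mstar u) - w (u, mμ u)) := by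
  have hμinj : Function.Injective mμ := fun u u' h => by
    rw [← hmi u, ← hmi u', h]
  have hπinj : Function.Injective (fun u => invμ (mstar u)) := by
    intro u u' h
    apply hsinj
    have := congrArg mμ h
    rwa [him, him] at this
  have hπsurj : Function.Surjective (fun u => invμ (mstar u)) :=
    Finite.surjective_of_injective hπinj
  set b : α → β := fun u => if u ∈ S then mstar u else mμ u with hb
  set ν : Finset (α × β) := Finset.univ.image (fun u => (u, b u)) with hν
  have hmem : ∀ u, (u, b u) ∈ ν := fun u => Finset.mem_image.mpr ⟨u, Finset.mem_univ _, rfl⟩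
  have hbinj : ∀ u u', b u = b u' → u = u' := by
    intro u u' h
    by_cases h1 : u ∈ S <;> by_cases h2 : u' ∈ S
    · exact hsinj (by simpa [hb, h1, h2] using h)
    · exfalso
      have h3 : mstar u = mμ u' := by simpa [hb, h1, h2] using h
      have : invμ (mstar u) = u' := by rw [h3, hmi]
      exact h2 (this ▸ (hS u).mpr h1)
    · exfalso
      have h3 : mμ u = mstar u' := by simpa [hb, h1, h2] using h
      have : invμ (mstar u') = u := by rw [← h3, hmi]
      exact h1 (this ▸ (hS u').mpr h2)
    · exact hμinj (by simpa [hb, h1, h2] using h)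
  have hνm : IsMatching ν := by
    rintro e he f hf hor
    obtain ⟨u, -, rfl⟩ := Finset.mem_image.mp he
    obtain ⟨u', -, rfl⟩ := Finset.mem_image.mp hf
    rcases hor with h | h
    · simp only at h; rw [h]
    · rw [hbinj u u' h]
  have hνpm : IsPerfectMatching E ν := by
    refine ⟨?_, hνm, fun u => ⟨b u, hmem u⟩, ?_⟩
    · intro e he
      obtain ⟨u, -, rfl⟩ := Finset.mem_image.mp he
      by_cases h : u ∈ S
      · simpa [hb, h] using hstarE (hms u)
      · simpa [hb, h] using hμmin.1.1 (hmm u)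
    · intro v
      by_cases h : invμ v ∈ S
      · obtain ⟨u', hu'⟩ := hπsurj (invμ v)
        have hu'2 : invμ (mstar u') = invμ v := hu'
        have hu'S : u' ∈ S := (hS u').mp (by rw [hu'2]; exact h)
        have hv : mstar u' = v := by
          have h5 := congrArg mμ hu'2
          rwa [him, him] at h5
        refine ⟨u', ?_⟩
        have : b u' = v := by rw [hb]; simp only [if_pos hu'S]; exact hv
        have h6 := hmem u'; rw [this] at h6; exact h6
      · refine ⟨invμ v, ?_⟩
        have : b (invμ v) = v := by rw [hb]; simp only [if_neg h]; exact him v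
        have h6 := hmem (invμ v); rw [this] at h6; exact h6
  have hw1 : matchingWeight w ν = ∑ u, w (u, b u) := by
    rw [hν, matchingWeight, Finset.sum_image]
    intro x _ y _ h
    simpa using congrArg Prod.fst h
  have hw2 : ∑ u, w (u, b u) = ∑ u ∈ S, w (u, mstar u) + ∑ u ∈ Sᶜ, w (u, mμ u) := by
    rw [← Finset.sum_add_sum_compl S]
    congr 1
    · exact Finset.sum_congr rfl fun u hu => by rw [hb]; simp [hu]
    · exact Finset.sum_congr rfl fun u hu => by
        rw [hb]; simp [Finset.mem_compl.mp hu]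
  have hw3 : matchingWeight w μ = ∑ u ∈ S, w (u, mμ u) + ∑ u ∈ Sᶜ, w (u, mμ u) := by
    rw [matchingWeight_eq_sum w hμmin.1.2.1 hmm, ← Finset.sum_add_sum_compl S]
  have hmin := hμmin.2 ν hνpm
  rw [Finset.sum_sub_distrib]
  rw [hw1, hw2, hw3] at hmin
  linarith

lemma invμ_inj (him : ∀ v, mμ (invμ v) = v) : Function.Injective invμ := by
  intro v v' h
  rw [← him v, ← him v', h]

lemma orb_inl_mem (hn : 0 < n) (hper : (mstep mstar invμ)^[n] x0 = x0)
    (hsinj : Function.Injective mstar) (him : ∀ v, mμ (invμ v) = v)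
    {u : α} (hu : Sum.inl u ∈ orbFin (mstep mstar invμ) x0 n) :
    Sum.inr (mstar u) ∈ orbFin (mstep mstar invμ) x0 n ∧
      Sum.inr (mμ u) ∈ orbFin (mstep mstar invμ) x0 n := by
  constructor
  · have := orbFin_closed (mstep mstar invμ) hn hper _ hu
    exact this
  · obtain ⟨y, hy, hy2⟩ := orbFin_pred (mstep mstar invμ) hn hper _ hu
    cases y with
    | inl u' => exact absurd hy2 (by simp [mstep])
    | inr v =>
      have hv : invμ v = u := by simpa [mstep] using hy2
      have : v = mμ u := by rw [← hv, him]
      rwa [← this]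

lemma orb_inr_mem (hn : 0 < n) (hper : (mstep mstar invμ)^[n] x0 = x0)
    (hsinj : Function.Injective mstar) (him : ∀ v, mμ (invμ v) = v)
    {v : β} (hv : Sum.inr v ∈ orbFin (mstep mstar invμ) x0 n) :
    Sum.inl (invμ v) ∈ orbFin (mstep mstar invμ) x0 n ∧
      ∃ u, mstar u = v ∧ Sum.inl u ∈ orbFin (mstep mstar invμ) x0 n := by
  constructor
  · exact orbFin_closed (mstep mstar invμ) hn hper _ hv
  · obtain ⟨y, hy, hy2⟩ := orbFin_pred (mstep mstar invμ) hn hper _ hv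
    cases y with
    | inl u => exact ⟨u, by simpa [mstep] using hy2, hy⟩
    | inr v' => exact absurd hy2 (by simp [mstep])

lemma orb_toLeft_pi_closed (hn : 0 < n) (hper : (mstep mstar invμ)^[n] x0 = x0)
    (hsinj : Function.Injective mstar) (him : ∀ v, mμ (invμ v) = v) :
    ∀ u : α, invμ (mstar u) ∈ (orbFin (mstep mstar invμ) x0 n).toLeft ↔
      u ∈ (orbFin (mstep mstar invμ) x0 n).toLeft := by
  intro u
  simp only [Finset.mem_toLeft]
  constructor
  · intro h
    obtain ⟨y, hy, hy2⟩ := orbFin_pred (mstep mstar invμ) hn hper _ h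
    cases y with
    | inl u' => exact absurd hy2 (by simp [mstep])
    | inr v =>
      have hv : invμ v = invμ (mstar u) := by simpa [mstep] using hy2
      have hveq : v = mstar u := invμ_inj him hv
      subst hveq
      obtain ⟨-, u', hu'1, hu'2⟩ := orb_inr_mem hn hper hsinj him hy
      rwa [hsinj hu'1] at hu'2
  · intro h
    have h1 := orbFin_closed (mstep mstar invμ) hn hper _ h
    have h2 := orbFin_closed (mstep mstar invμ) hn hper _ h1
    simpa [mstep] using h2

lemma cycleWeight_orb (hn : 0 < n) (hper : (mstep mstar invμ)^[n] x0 = x0)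
    (hinj : ∀ i < n, ∀ j < n,
      (mstep mstar invμ)^[i] x0 = (mstep mstar invμ)^[j] x0 → i = j)
    (hsinj : Function.Injective mstar) (him : ∀ v, mμ (invμ v) = v)
    (hmi : ∀ u, invμ (mμ u) = u) :
    cycleWeight (auxW tw) ((List.range n).map (fun i => (mstep mstar invμ)^[i] x0))
      = ∑ u ∈ (orbFin (mstep mstar invμ) x0 n).toLeft, (tw (u, mstar u) - tw (u, mμ u)) := by
  set step := mstep mstar invμ with hstep
  set A := orbFin step x0 n with hA
  set F : α ⊕ β → ℝ := Sum.elim (fun u => tw (u, mstar u)) (fun v => - tw (invμ v, v)) with hF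
  rw [cycleWeight, map_range_append_take_one n hn _ (by rw [hper]; rfl),
    walkWeight_map_range]
  have hstepw : ∀ i, auxW tw (step^[i] x0) (step^[i+1] x0) = F (step^[i] x0) := by
    intro i
    rw [Function.iterate_succ_apply']
    cases step^[i] x0 <;> rfl
  rw [Finset.sum_congr rfl (fun i _ => hstepw i)]
  have himg : ∑ x ∈ A, F x = ∑ i ∈ Finset.range n, F (step^[i] x0) := by
    rw [hA, orbFin, Finset.sum_image]
    intro i hi j hj h
    exact hinj i (Finset.mem_range.mp hi) j (Finset.mem_range.mp hj) h
  rw [← himg]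
  have hsplit : ∑ x ∈ A, F x
      = ∑ u ∈ A.toLeft, F (Sum.inl u) + ∑ v ∈ A.toRight, F (Sum.inr v) := by
    conv_lhs => rw [← Finset.toLeft_disjSum_toRight (u := A)]
    rw [Finset.sum_disjSum]
  rw [hsplit]
  have hright : ∑ v ∈ A.toRight, F (Sum.inr v) = ∑ u ∈ A.toLeft, - tw (u, mμ u) := by
    apply Finset.sum_nbij' (i := invμ) (j := mμ)
    · intro v hv
      rw [Finset.mem_toLeft]
      exact (orb_inr_mem hn hper hsinj him (Finset.mem_toRight.mp hv)).1
    · intro u hu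
      rw [Finset.mem_toRight]
      exact (orb_inl_mem hn hper hsinj him (Finset.mem_toLeft.mp hu)).2
    · intro v _; exact him v
    · intro u _; exact hmi u
    · intro v _
      rw [hF]
      simp only [Sum.elim_inr]
      rw [him]
  rw [hright, ← Finset.sum_add_distrib]
  apply Finset.sum_congr rfl
  intro u _
  rw [hF]; simp only [Sum.elim_inl]; ring

lemma isDiCycle_orb (hn : 0 < n) (hper : (mstep mstar invμ)^[n] x0 = x0)
    (hinj : ∀ i < n, ∀ j < n,
      (mstep mstar invμ)^[i] x0 = (mstep mstar invμ)^[j] x0 → i = j)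
    (hstarE : μstar ⊆ E) (hms : ∀ u, (u, mstar u) ∈ μstar)
    (hinv : ∀ v, (invμ v, v) ∈ μ) (huv : ∀ u v, (u, v) ∈ μ → u = invμ v)
    (hmoved : ∀ u, Sum.inl u ∈ orbFin (mstep mstar invμ) x0 n → invμ (mstar u) ≠ u) :
    IsDiCycle (auxAdj E μ) ((List.range n).map (fun i => (mstep mstar invμ)^[i] x0)) := by
  set step := mstep mstar invμ with hstep
  refine ⟨?_, ?_, ?_⟩
  · simp only [ne_eq, List.map_eq_nil_iff, List.range_eq_nil]
    omega
  · exact nodup_map_range n _ hinj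
  · rw [map_range_append_take_one n hn _ (by rw [hper]; rfl), chain'_map_range]
    intro i hi
    rw [Function.iterate_succ_apply']
    have hmem : step^[i] x0 ∈ orbFin step x0 n :=
      Finset.mem_image.mpr ⟨i, Finset.mem_range.mpr hi, rfl⟩
    cases h : step^[i] x0 with
    | inl u =>
      refine ⟨hstarE (hms u), fun hc => ?_⟩
      exact hmoved u (h ▸ hmem) (huv u (mstar u) hc).symm
    | inr v => exact hinv v

lemma usedEdges_orb_subset (hn : 0 < n) (hper : (mstep mstar invμ)^[n] x0 = x0)
    (hsinj : Function.Injective mstar) (him : ∀ v, mμ (invμ v) = v)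
    (hms : ∀ u, (u, mstar u) ∈ μstar) (hsu : ∀ u v, (u, v) ∈ μstar → v = mstar u)
    (hinv : ∀ v, (invμ v, v) ∈ μ) (huv : ∀ u v, (u, v) ∈ μ → u = invμ v)
    (hmoved : ∀ u, Sum.inl u ∈ orbFin (mstep mstar invμ) x0 n → invμ (mstar u) ≠ u) :
    (orbFin (mstep mstar invμ) x0 n).image (edgeOf mstar invμ) ⊆ symmDiff μstar μ := by
  intro e he
  obtain ⟨x, hx, rfl⟩ := Finset.mem_image.mp he
  rw [Finset.mem_symmDiff]
  cases x with
  | inl u =>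
    left
    refine ⟨hms u, fun hc => ?_⟩
    exact hmoved u hx (huv u (mstar u) hc).symm
  | inr v =>
    right
    refine ⟨hinv v, fun hc => ?_⟩
    have h1 : v = mstar (invμ v) := hsu _ _ hc
    have h2 : Sum.inl (invμ v) ∈ orbFin (mstep mstar invμ) x0 n :=
      (orb_inr_mem hn hper hsinj him hx).1
    exact hmoved (invμ v) h2 (by rw [← h1])

lemma step_determined (hsu : ∀ u v, (u, v) ∈ μstar → v = mstar u)
    (huv : ∀ u v, (u, v) ∈ μ → u = invμ v) {x y : α ⊕ β}
    (hadj : auxAdj E μ x y)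
    (hedge : ∀ e, undEdge (x, y) = some e → e ∈ symmDiff μstar μ) :
    y = mstep mstar invμ x := by
  cases x with
  | inl u =>
    cases y with
    | inl u' => exact absurd hadj (by simp [auxAdj])
    | inr v =>
      obtain ⟨hE, hnμ⟩ := hadj
      have hsy := hedge (u, v) rfl
      rw [Finset.mem_symmDiff] at hsy
      rcases hsy with ⟨h1, -⟩ | ⟨h1, -⟩
      · rw [show v = mstar u from hsu u v h1]; rfl
      · exact absurd h1 hnμ
  | inr v =>
    cases y with
    | inl u =>
      have h1 : (u, v) ∈ μ := hadj
      rw [huv u v h1]; rfl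
    | inr v' => exact absurd hadj (by simp [auxAdj])

end matching



/-- Let `μ` be a minimum-weight perfect matching for `(G, w)`, `s ∈ V⁺`, and
let `w̃` agree with `w` off `δ_G(s)`. If `μ*` is a perfect matching with `w̃(μ*) < w̃(μ)`,
then `μ* △ μ` contains a directed cycle `C` of `G_μ` through `s` with
`w̃_μ(C) ≤ w̃(μ*) − w̃(μ) < 0`, and `C` is the only negative cycle of `μ* △ μ`
(uniqueness stated via the underlying edge sets). -/
theorem negative_cycle_through_updated_vertex
    [Fintype α] [Fintype β] [DecidableEq α] [DecidableEq β]
    (E μ μstar : Finset (α × β)) (w tw : α × β → ℝ) (s : α)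
    (hμ : IsMinPerfectMatching E w μ)
    (htw : ∀ e ∈ E, e.1 ≠ s → tw e = w e)
    (hstar : IsPerfectMatching E μstar)
    (hlt : matchingWeight tw μstar < matchingWeight tw μ) :
    ∃ C : List (α ⊕ β), IsDiCycle (auxAdj E μ) C ∧
      usedEdges (C ++ C.take 1) ⊆ symmDiff μstar μ ∧
      Sum.inl s ∈ C ∧
      cycleWeight (auxW tw) C ≤ matchingWeight tw μstar - matchingWeight tw μ ∧
      cycleWeight (auxW tw) C < 0 ∧
      ∀ C' : List (α ⊕ β), IsDiCycle (auxAdj E μ) C' →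
        usedEdges (C' ++ C'.take 1) ⊆ symmDiff μstar μ →
        cycleWeight (auxW tw) C' < 0 →
        usedEdges (C' ++ C'.take 1) = usedEdges (C ++ C.take 1) := by
  classical
  obtain ⟨⟨hμE, hμM, hμl, hμr⟩, hμmin⟩ := hμ
  obtain ⟨hsE, hsM, hsl, hsr⟩ := hstar
  choose mstar hms using hsl
  choose mμ hmm using hμl
  choose invμ hinv using hμr
  have hsu : ∀ u v, (u, v) ∈ μstar → v = mstar u := fun u v h => by
    have := hsM (u, v) h (u, mstar u) (hms u) (Or.inl rfl)
    simpa using congrArg Prod.snd this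
  have hmu : ∀ u v, (u, v) ∈ μ → v = mμ u := fun u v h => by
    have := hμM (u, v) h (u, mμ u) (hmm u) (Or.inl rfl)
    simpa using congrArg Prod.snd this
  have huv : ∀ u v, (u, v) ∈ μ → u = invμ v := fun u v h => by
    have := hμM (u, v) h (invμ v, v) (hinv v) (Or.inr rfl)
    simpa using congrArg Prod.fst this
  have hsinj : Function.Injective mstar := by
    intro u u' h
    have := hsM (u, mstar u) (hms u) (u', mstar u') (hms u') (Or.inr h)
    simpa using congrArg Prod.fst this
  have him : ∀ v, mμ (invμ v) = v := fun v => (hmu _ _ (hinv v)).symm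
  have hmi : ∀ u, invμ (mμ u) = u := fun u => (huv _ _ (hmm u)).symm
  have hμ' : IsMinPerfectMatching E w μ :=
    ⟨⟨hμE, hμM, fun u => ⟨mμ u, hmm u⟩, fun v => ⟨invμ v, hinv v⟩⟩, hμmin⟩
  set π : α → α := fun u => invμ (mstar u) with hπdef
  set f : α → ℝ := fun u => tw (u, mstar u) - tw (u, mμ u) with hfdef
  set g : α → ℝ := fun u => w (u, mstar u) - w (u, mμ u) with hgdef
  have hfg : ∀ u, u ≠ s → f u = g u := by
    intro u hu
    rw [hfdef, hgdef]
    simp only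
    rw [htw (u, mstar u) (hsE (hms u)) hu, htw (u, mμ u) (hμE (hmm u)) hu]
  have hsumf : ∑ u, f u = matchingWeight tw μstar - matchingWeight tw μ := by
    rw [matchingWeight_eq_sum tw hsM hms, matchingWeight_eq_sum tw hμM hmm,
      ← Finset.sum_sub_distrib]
  have hsumg : ∑ u, g u = matchingWeight w μstar - matchingWeight w μ := by
    rw [matchingWeight_eq_sum w hsM hms, matchingWeight_eq_sum w hμM hmm,
      ← Finset.sum_sub_distrib]
  have hgnn : 0 ≤ ∑ u, g u := by
    rw [hsumg]
    have := hμmin μstar ⟨hsE, hsM, fun u => ⟨mstar u, hms u⟩, hsr⟩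
    linarith
  have hπinj : Function.Injective π := by
    intro u u' h
    simp only [hπdef] at h
    apply hsinj
    have := congrArg mμ h
    rwa [him, him] at this
  have hπs : π s ≠ s := by
    intro h
    simp only [hπdef] at h
    have hss : mstar s = mμ s := by
      conv_lhs => rw [← him (mstar s)]
      rw [h]
    have hfgall : ∑ u, f u = ∑ u, g u := by
      apply Finset.sum_congr rfl
      intro u _
      by_cases hu : u = s
      · subst hu
        rw [hfdef, hgdef]
        simp only
        rw [hss]
        ring
      · exact hfg u hu
    rw [hsumf] at hfgall
    linarith
  obtain ⟨k, hk0, hks⟩ : ∃ k, 0 < k ∧ π^[k] s = s := by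
    have hbij : Function.Bijective π := ⟨hπinj, Finite.surjective_of_injective hπinj⟩
    refine ⟨orderOf (Equiv.ofBijective π hbij), orderOf_pos _, ?_⟩
    have h2 : π^[orderOf (Equiv.ofBijective π hbij)] s
        = ⇑((Equiv.ofBijective π hbij) ^ orderOf (Equiv.ofBijective π hbij)) s := by
      rw [Equiv.Perm.coe_pow]; rfl
    rw [h2, pow_orderOf_eq_one]; rfl
  set step : α ⊕ β → α ⊕ β := mstep mstar invμ with hstepdef
  have hstep2 : ∀ (i : ℕ) (u : α), step^[2*i] (Sum.inl u) = Sum.inl (π^[i] u) := by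
    intro i
    induction i with
    | zero => intro u; rfl
    | succ i ih =>
      intro u
      rw [show 2 * (i+1) = 2*i + 2 by ring, Function.iterate_add_apply]
      have h2 : step^[2] (Sum.inl u) = Sum.inl (π u) := rfl
      rw [h2, ih, ← Function.iterate_succ_apply]
  have hshape : ∀ j, (∃ i, step^[j] (Sum.inl s) = Sum.inl (π^[i] s)) ∨
      (∃ i, step^[j] (Sum.inl s) = Sum.inr (mstar (π^[i] s))) := by
    intro j
    induction j with
    | zero => exact Or.inl ⟨0, rfl⟩
    | succ j ih =>
      rw [Function.iterate_succ_apply']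
      rcases ih with ⟨i, hi⟩ | ⟨i, hi⟩
      · right; exact ⟨i, by rw [hi]; rfl⟩
      · left
        refine ⟨i+1, ?_⟩
        rw [hi, Function.iterate_succ_apply']
        rfl
  have hperiodic : Sum.inl s ∈ Function.periodicPts step :=
    Function.mk_mem_periodicPts (n := 2*k) (by omega)
      (by show step^[2*k] (Sum.inl s) = Sum.inl s; rw [hstep2, hks])
  set n := Function.minimalPeriod step (Sum.inl s) with hndef
  have hn : 0 < n := Function.minimalPeriod_pos_of_mem_periodicPts hperiodic
  have hper : step^[n] (Sum.inl s) = Sum.inl s := Function.iterate_minimalPeriod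
  have hinj : ∀ i < n, ∀ j < n, step^[i] (Sum.inl s) = step^[j] (Sum.inl s) → i = j := by
    intro i hi j hj h
    exact Function.iterate_injOn_Iio_minimalPeriod (Set.mem_Iio.mpr hi) (Set.mem_Iio.mpr hj) h
  set A := orbFin step (Sum.inl s) n with hAdef
  set C := (List.range n).map (fun i => step^[i] (Sum.inl s)) with hCdef
  have hmoved : ∀ u, Sum.inl u ∈ A → invμ (mstar u) ≠ u := by
    intro u hu heq
    obtain ⟨j, -, hj⟩ := Finset.mem_image.mp hu
    rcases hshape j with ⟨i, hi⟩ | ⟨i, hi⟩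
    · rw [hj] at hi
      have hu_eq : u = π^[i] s := by injection hi
      apply hπs
      apply hπinj.iterate i
      rw [← Function.iterate_succ_apply, Function.iterate_succ_apply', ← hu_eq]
      exact heq
    · rw [hj] at hi
      simp at hi
  have hsinA : Sum.inl s ∈ A := Finset.mem_image.mpr ⟨0, Finset.mem_range.mpr hn, rfl⟩
  have hsO : s ∈ A.toLeft := Finset.mem_toLeft.mpr hsinA
  have hcyc : IsDiCycle (auxAdj E μ) C := isDiCycle_orb hn hper hinj hsE hms hinv huv hmoved
  have hused : usedEdges (C ++ C.take 1) = A.image (edgeOf mstar invμ) := by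
    rw [hCdef, map_range_append_take_one n hn _ (by rw [hper]; rfl)]
    exact usedEdges_map_range mstar invμ _ n
  have husedsub : usedEdges (C ++ C.take 1) ⊆ symmDiff μstar μ := by
    rw [hused]
    exact usedEdges_orb_subset hn hper hsinj him hms hsu hinv huv hmoved
  have hmemC : Sum.inl s ∈ C := by
    rw [hCdef]
    exact List.mem_map.mpr ⟨0, List.mem_range.mpr hn, rfl⟩
  have hwC : cycleWeight (auxW tw) C = ∑ u ∈ A.toLeft, f u :=
    cycleWeight_orb hn hper hinj hsinj him hmi
  have hposf : ∀ S : Finset α, s ∉ S → (∀ u, π u ∈ S ↔ u ∈ S) → 0 ≤ ∑ u ∈ S, f u := by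
    intro S hsS hScl
    have h1 : ∑ u ∈ S, f u = ∑ u ∈ S, g u :=
      Finset.sum_congr rfl (fun u hu => hfg u (fun h => hsS (h ▸ hu)))
    rw [h1, hgdef]
    exact switch_nonneg hμ' hsE hms hmm hsinj him hmi S hScl
  have hπcl : ∀ u, π u ∈ A.toLeft ↔ u ∈ A.toLeft := orb_toLeft_pi_closed hn hper hsinj him
  have hcompl : 0 ≤ ∑ u ∈ A.toLeftᶜ, f u := by
    apply hposf
    · simp [hsO]
    · intro u
      simp only [Finset.mem_compl]
      exact not_iff_not.mpr (hπcl u)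
  have hsplitf : ∑ u ∈ A.toLeft, f u + ∑ u ∈ A.toLeftᶜ, f u = ∑ u, f u :=
    Finset.sum_add_sum_compl _ _
  have hwCle : cycleWeight (auxW tw) C ≤ matchingWeight tw μstar - matchingWeight tw μ := by
    rw [hwC, ← hsumf]
    linarith
  have hwCneg : cycleWeight (auxW tw) C < 0 := by
    apply lt_of_le_of_lt hwCle
    linarith
  refine ⟨C, hcyc, husedsub, hmemC, hwCle, hwCneg, ?_⟩
  intro C' hC' hsub' hneg'
  obtain ⟨hne', hnodup', hchain'⟩ := hC'
  have hn'0 : 0 < C'.length := List.length_pos_iff.mpr hne'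
  obtain ⟨n', hn'def⟩ : ∃ m, m = C'.length := ⟨_, rfl⟩
  obtain ⟨x0, hx0def⟩ : ∃ x, x = C'.get ⟨0, hn'0⟩ := ⟨_, rfl⟩
  have hn' : 0 < n' := hn'def ▸ hn'0
  have htake1 : C'.take 1 = [C'.get ⟨0, hn'0⟩] := by
    cases C' with
    | nil => exact absurd rfl hne'
    | cons a t => rfl
  have hLlen : (C' ++ C'.take 1).length = C'.length + 1 := by
    rw [List.length_append, htake1]; rfl
  have hstepL : ∀ i (h : i + 1 < (C' ++ C'.take 1).length),
      (C' ++ C'.take 1).get ⟨i+1, h⟩ = step ((C' ++ C'.take 1).get ⟨i, by omega⟩) := by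
    intro i h
    have hadj : auxAdj E μ ((C' ++ C'.take 1).get ⟨i, by omega⟩)
        ((C' ++ C'.take 1).get ⟨i+1, h⟩) := by
      have := List.isChain_iff_getElem.mp hchain' i (by omega)
      exact this
    apply step_determined hsu huv hadj
    intro e he
    apply hsub'
    exact List.mem_toFinset.mpr (List.mem_filterMap.mpr ⟨_, mem_zip_tail _ i h, he⟩)
  have hhead : (C' ++ C'.take 1).get ⟨0, by rw [hLlen]; omega⟩ = x0 := by
    rw [List.get_eq_getElem, List.getElem_append_left hn'0, hx0def, List.get_eq_getElem]
  have hLget : ∀ i (h : i < (C' ++ C'.take 1).length),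
      (C' ++ C'.take 1).get ⟨i, h⟩ = step^[i] x0 :=
    getElem_eq_iterate _ x0 step (by rw [hLlen]; omega) hhead hstepL
  have hperC' : step^[n'] x0 = x0 := by
    have h1 := hLget C'.length (by rw [hLlen]; omega)
    have h2 : (C' ++ C'.take 1).get ⟨C'.length, by rw [hLlen]; omega⟩ = x0 := by
      rw [List.get_eq_getElem, List.getElem_append_right (le_refl _)]
      simp [htake1, hx0def]
    rw [h2] at h1
    rw [hn'def]
    exact h1.symm
  have hC'get : ∀ i (h : i < C'.length), C'.get ⟨i, h⟩ = step^[i] x0 := by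
    intro i h
    have h2 := hLget i (by rw [hLlen]; omega)
    rw [← h2, List.get_eq_getElem, List.get_eq_getElem, List.getElem_append_left h]
  have hinj' : ∀ i < n', ∀ j < n', step^[i] x0 = step^[j] x0 → i = j := by
    intro i hi j hj h
    rw [hn'def] at hi hj
    have := List.nodup_iff_injective_get.mp hnodup'
      (a₁ := ⟨i, hi⟩) (a₂ := ⟨j, hj⟩) (by rw [hC'get i hi, hC'get j hj, h])
    exact congrArg Fin.val this
  have hC'eq : C' = (List.range n').map (fun i => step^[i] x0) := by
    apply List.ext_get (by simp [← hn'def])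
    intro i h1 h2
    rw [hC'get i h1]
    simp
  have hused' : usedEdges (C' ++ C'.take 1) = (orbFin step x0 n').image (edgeOf mstar invμ) := by
    rw [hC'eq, map_range_append_take_one n' hn' _ (by rw [hperC']; rfl)]
    exact usedEdges_map_range mstar invμ x0 n'
  have hw' : cycleWeight (auxW tw) C' = ∑ u ∈ (orbFin step x0 n').toLeft, f u := by
    rw [hC'eq]
    exact cycleWeight_orb hn' hperC' hinj' hsinj him hmi
  have hπA' : ∀ u, π u ∈ (orbFin step x0 n').toLeft ↔ u ∈ (orbFin step x0 n').toLeft :=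
    orb_toLeft_pi_closed hn' hperC' hsinj him
  have hsA' : s ∈ (orbFin step x0 n').toLeft := by
    by_contra hs
    have := hposf _ hs hπA'
    rw [hw'] at hneg'
    linarith
  have hAA : A = orbFin step x0 n' :=
    orbFin_eq_of_mem step hn' hperC' hn hper (Finset.mem_toLeft.mp hsA')
  rw [hused', hused, hAA]
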